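/- Let (X, d) be a metric space and let f : X → [−∞,+∞] be (K,N)-convex for some K ∈ ℝ and N < 0. Then for every y ∈ D[f] and every R > 0, with R < π·√(N/K) if K < 0, the descending slope satisfies |D⁻f|(y) = sup over z ∈ B_R(y) \ {y} of max{ −( (N/𝔰_{K,N}(d(z,y)))·(1 − f_N(z)/f_N(y)) − K·𝔰_{K,N}(d(z,y)/2)/𝔠_{K,N}(d(z,y)/2) ), 0 }, where B_R(y) is the open ball of radius R centered at y. -/

import Mathlib

open Filter MeasureTheory Set
open scoped ENNReal Topology

noncomputable section

namespace KNPaper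

variable {X : Type*} [MetricSpace X]

/-- A geodesic parametrized on `[0,1]`: `d(γ s, γ t) = |t - s| * d(γ 0, γ 1)`. -/
def IsGeodesic (γ : ℝ → X) : Prop :=
  ∀ s ∈ Set.Icc (0:ℝ) 1, ∀ t ∈ Set.Icc (0:ℝ) 1,
    dist (γ s) (γ t) = |t - s| * dist (γ 0) (γ 1)

/-- Extended exponential `EReal → ℝ≥0∞`, with `exp ⊥ = 0` and `exp ⊤ = ⊤`. -/
def eexp (x : EReal) : ℝ≥0∞ :=
  if x = ⊤ then ⊤ else if x = ⊥ then 0 else ENNReal.ofReal (Real.exp x.toReal)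

/-- The nonnegative part of an extended real, valued in `ℝ≥0∞`. -/
def epos (x : EReal) : ℝ≥0∞ :=
  if x = ⊤ then ⊤ else ENNReal.ofReal x.toReal

/-- `f_N := exp (-f/N)`, with the conventions `exp(-∞) = 0`, `exp(+∞) = +∞`. -/
def fN (f : X → EReal) (N : ℝ) (x : X) : ℝ≥0∞ :=
  eexp (((-1/N : ℝ) : EReal) * f x)

/-- The finiteness domain `D[f]`. -/
def Dom (f : X → EReal) : Set X := {x | f x ≠ ⊤ ∧ f x ≠ ⊥}

/-- The extended domain `D*[f]`. -/
def DomStar (f : X → EReal) : Set X := {x | f x ≠ ⊤}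

/-- The function `𝔰_{K,N}`. -/
def sKN (K N θ : ℝ) : ℝ :=
  if K < 0 then Real.sin (θ * Real.sqrt (K/N)) / Real.sqrt (K/N)
  else if K = 0 then θ
  else Real.sinh (θ * Real.sqrt (-K/N)) / Real.sqrt (-K/N)

/-- The function `𝔠_{K,N}`. -/
def cKN (K N θ : ℝ) : ℝ :=
  if K < 0 then Real.cos (θ * Real.sqrt (K/N))
  else if K = 0 then 1
  else Real.cosh (θ * Real.sqrt (-K/N))

/-- The distortion coefficient `σ_{K,N}^{(t)}(θ)`, valued in `[0,∞]`. -/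
def sigmaKN (K N t θ : ℝ) : ℝ≥0∞ :=
  if (N * Real.pi ^ 2 < K * θ ^ 2 ∧ K * θ ^ 2 < 0) ∨ 0 < K * θ ^ 2 then
    ENNReal.ofReal (sKN K N (t * θ) / sKN K N θ)
  else if K * θ ^ 2 = 0 then ENNReal.ofReal t
  else ⊤

/-- `(K,N)`-convexity of `f` on a subset `s` (with `N < 0`). -/
def KNConvexOn (f : X → EReal) (K N : ℝ) (s : Set X) : Prop :=
  ∀ x₀ ∈ s, ∀ x₁ ∈ s, f x₀ ≠ ⊤ → f x₁ ≠ ⊤ →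
    (K < 0 → dist x₀ x₁ < Real.pi * Real.sqrt (N / K)) →
    ∃ γ : ℝ → X, IsGeodesic γ ∧ (∀ t ∈ Set.Icc (0:ℝ) 1, γ t ∈ s) ∧ γ 0 = x₀ ∧ γ 1 = x₁ ∧
      ∀ t ∈ Set.Icc (0:ℝ) 1,
        fN f N (γ t) ≤ sigmaKN K N (1 - t) (dist x₀ x₁) * fN f N x₀
          + sigmaKN K N t (dist x₀ x₁) * fN f N x₁

/-- `(K,N)`-convexity of `f` (with `N < 0`). -/
def KNConvex (f : X → EReal) (K N : ℝ) : Prop := KNConvexOn f K N Set.univ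

/-- `λ`-convexity of an extended-real-valued function along geodesics. -/
def LambdaConvex (g : X → EReal) (lam : ℝ) : Prop :=
  ∀ x₀ x₁ : X, x₀ ∈ Dom g → x₁ ∈ Dom g →
    ∃ γ : ℝ → X, IsGeodesic γ ∧ γ 0 = x₀ ∧ γ 1 = x₁ ∧
      ∀ t ∈ Set.Icc (0:ℝ) 1,
        g (γ t) ≤ (((1 - t) * (g x₀).toReal + t * (g x₁).toReal
          - lam / 2 * (t * (1 - t)) * dist x₀ x₁ ^ 2 : ℝ) : EReal)

/-- Upper right Dini derivative of a real function, valued in `EReal`. -/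
def diniUR (g : ℝ → ℝ) (t : ℝ) : EReal :=
  Filter.limsup (fun h : ℝ => (((g (t + h) - g t) / h : ℝ) : EReal)) (𝓝[>] (0:ℝ))

/-- The time interval `(0,T)` for `T ∈ (0,∞]`, as a set of reals. -/
def domT (T : ℝ≥0∞) : Set ℝ := {t : ℝ | 0 < t ∧ ENNReal.ofReal t < T}

/-- `EVI_λ` gradient curve for `g` on `(0,T)`. -/
def IsEVIlam (g : X → EReal) (lam : ℝ) (T : ℝ≥0∞) (z : ℝ → X) : Prop :=
  0 < T ∧ ContinuousOn z (domT T) ∧ (∀ t ∈ domT T, z t ∈ Dom g) ∧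
    ∀ t ∈ domT T, ∀ x ∈ Dom g,
      diniUR (fun s => dist (z s) x ^ 2 / 2) t + ((lam / 2 * dist (z t) x ^ 2 : ℝ) : EReal)
        ≤ (((g x).toReal - (g (z t)).toReal : ℝ) : EReal)

/-- `EVI_{K,N}` gradient curve for `f` on `(0,T)` (with `N < 0`). -/
def IsEVIKN (f : X → EReal) (K N : ℝ) (T : ℝ≥0∞) (y : ℝ → X) : Prop :=
  0 < T ∧ ContinuousOn y (domT T) ∧ (∀ t ∈ domT T, y t ∈ Dom f) ∧
    ∀ t ∈ domT T, ∀ x ∈ closure (Dom f),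
      (K < 0 → dist (y t) x < Real.pi * Real.sqrt (N / K)) →
      diniUR (fun s => sKN K N (dist (y s) x / 2) ^ 2) t
          + ((K * sKN K N (dist (y t) x / 2) ^ 2 : ℝ) : EReal)
        ≤ ((N / 2 : ℝ) : EReal) * (1 - ((fN f N x / fN f N (y t) : ℝ≥0∞) : EReal))

/-- A curve starts at `y₀` if `y_t → y₀` as `t ↓ 0`. -/
def StartsAt (y : ℝ → X) (y₀ : X) : Prop := Filter.Tendsto y (𝓝[>] (0:ℝ)) (𝓝 y₀)

/-- The class `𝒞` of continuous curves on `(0,T)` with values in `D[f]`. -/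
def InC (f : X → EReal) (T : ℝ≥0∞) (y : ℝ → X) : Prop :=
  0 < T ∧ ContinuousOn y (domT T) ∧ ∀ t ∈ domT T, y t ∈ Dom f

/-- The class `𝒞'`: curves in `𝒞` along which `f` is non-increasing. -/
def InC' (f : X → EReal) (T : ℝ≥0∞) (y : ℝ → X) : Prop :=
  InC f T y ∧ ∀ s ∈ domT T, ∀ t ∈ domT T, s ≤ t → f (y t) ≤ f (y s)

/-- The class `𝒞''_N`: curves in `𝒞'` with `∫₀^{min(T,1)} f_N(y_t) dt < ∞`. -/
def InC'' (f : X → EReal) (N : ℝ) (T : ℝ≥0∞) (y : ℝ → X) : Prop :=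
  InC' f T y ∧ ∫⁻ t in Set.Ioo (0:ℝ) ((min T 1).toReal), fN f N (y t) < ⊤

/-- The function `α(t) = -N ∫₀ᵗ f_N(y_r)⁻¹ dr`. -/
def alphaMap (f : X → EReal) (N : ℝ) (y : ℝ → X) (t : ℝ) : ℝ :=
  -N * ∫ r in Set.Ioo (0:ℝ) t, ((fN f N (y r))⁻¹).toReal

/-- The final time `T' = lim_{t→T⁻} α(t)` of the reparametrized curve `ℛ₁(y)`. -/
def R1T (f : X → EReal) (N : ℝ) (T : ℝ≥0∞) (y : ℝ → X) : ℝ≥0∞ :=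
  ⨆ t ∈ domT T, ENNReal.ofReal (alphaMap f N y t)

/-- The reparametrized curve `ℛ₁(y) = y ∘ φ`, `φ = α⁻¹`. -/
def R1fun (f : X → EReal) (N : ℝ) (T : ℝ≥0∞) (y : ℝ → X) : ℝ → X :=
  y ∘ Function.invFunOn (alphaMap f N y) (domT T)

/-- The function `β(s) = -(1/N) ∫₀ˢ f_N(z_r) dr`. -/
def betaMap (f : X → EReal) (N : ℝ) (z : ℝ → X) (s : ℝ) : ℝ :=
  -(1/N) * ∫ r in Set.Ioo (0:ℝ) s, (fN f N (z r)).toReal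

/-- The final time `T = lim_{s→T'⁻} β(s)` of the reparametrized curve `ℛ₂(z)`. -/
def R2T (f : X → EReal) (N : ℝ) (T' : ℝ≥0∞) (z : ℝ → X) : ℝ≥0∞ :=
  ⨆ s ∈ domT T', ENNReal.ofReal (betaMap f N z s)

/-- The reparametrized curve `ℛ₂(z) = z ∘ ψ`, `ψ = β⁻¹`. -/
def R2fun (f : X → EReal) (N : ℝ) (T' : ℝ≥0∞) (z : ℝ → X) : ℝ → X :=
  z ∘ Function.invFunOn (betaMap f N z) (domT T')

/-- The descending slope `|D⁻f|(y) = limsup_{z→y} (f(y)-f(z))⁺ / d(z,y)`, in `[0,∞]`. -/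
def descSlope (f : X → EReal) (y : X) : ℝ≥0∞ :=
  Filter.limsup (fun z : X => epos (f y - f z) / ENNReal.ofReal (dist z y)) (𝓝[≠] y)

/-- Directional derivative `g'(γ 0; ·) = liminf_{t↓0} (g(γ t) - g(γ 0))/t` along a curve. -/
def dirDeriv (g : X → EReal) (γ : ℝ → X) : EReal :=
  Filter.liminf (fun t : ℝ => (g (γ t) - g (γ 0)) * (((1/t : ℝ)) : EReal)) (𝓝[>] (0:ℝ))

/-- The quantity `[ẏ, z]_{t₀} = sup_{0<s≤1} (1/(2s)) (d⁺/dt)|_{t₀} d(y_t, z_s)²`. -/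
def bracket (y z : ℝ → X) (t₀ : ℝ) : EReal :=
  ⨆ s ∈ Set.Ioc (0:ℝ) 1,
    (((1 / (2 * s) : ℝ)) : EReal) * diniUR (fun t => dist (y t) (z s) ^ 2) t₀

/-- Metric speed `|γ̇|(t) = lim_{h→0} d(γ(t+h), γ(t))/|h| = v`. -/
def HasMetricSpeedAt (γ : ℝ → X) (t v : ℝ) : Prop :=
  Filter.Tendsto (fun h : ℝ => dist (γ (t + h)) (γ t) / |h|) (𝓝[≠] (0:ℝ)) (𝓝 v)

open Classical in
/-- The metric speed of a curve at a time (defaulting to `0` when it does not exist). -/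
def metricSpeed (γ : ℝ → X) (t : ℝ) : ℝ :=
  if h : ∃ v, HasMetricSpeedAt γ t v then h.choose else 0

/-- Metric absolute continuity on `[s,t]` with derivative control in `Lᵖ`. -/
def MetricACWith (p : ℝ≥0∞) (γ : ℝ → X) (s t : ℝ) : Prop :=
  ∃ g : ℝ → ℝ, MeasureTheory.MemLp g p (MeasureTheory.volume.restrict (Set.Icc s t)) ∧
    ∀ u ∈ Set.Icc s t, ∀ v ∈ Set.Icc s t, u ≤ v → dist (γ u) (γ v) ≤ ∫ r in u..v, g r

/-- `ACᵖ_loc` on a set: metric absolute continuity on every compact subinterval. -/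
def LocACOn (p : ℝ≥0∞) (γ : ℝ → X) (I : Set ℝ) : Prop :=
  ∀ s t : ℝ, s ≤ t → Set.Icc s t ⊆ I → MetricACWith p γ s t

/-- Curve of maximal slope for `f` on `(0,T)`. -/
def IsMaxSlopeCurve (f : X → EReal) (T : ℝ≥0∞) (y : ℝ → X) : Prop :=
  0 < T ∧ (∀ t ∈ domT T, y t ∈ Dom f) ∧
  LocACOn 1 y (domT T) ∧
  LocACOn 1 (fun t => (f (y t)).toReal) (domT T) ∧
  (∀ᵐ t ∂(MeasureTheory.volume.restrict (domT T)), ∃ v : ℝ, HasMetricSpeedAt y t v) ∧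
  ∀ᵐ t ∂(MeasureTheory.volume.restrict (domT T)),
    ∃ d : ℝ, HasDerivAt (fun s => (f (y s)).toReal) d t ∧
      ENNReal.ofReal (2⁻¹ * metricSpeed y t ^ 2) + 2⁻¹ * descSlope f (y t) ^ 2
        ≤ ENNReal.ofReal (-d)


section Aux
variable {K N : ℝ}

lemma sqrtKN_pos (hN : N < 0) (hK : K < 0) : 0 < Real.sqrt (K/N) :=
  Real.sqrt_pos.2 (div_pos_of_neg_of_neg hK hN)

lemma sqrtKN_sq (hN : N < 0) (hK : K < 0) : Real.sqrt (K/N) ^ 2 = K / N :=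
  Real.sq_sqrt (div_pos_of_neg_of_neg hK hN).le

lemma sqrtKN_pos' (hN : N < 0) (hK : 0 < K) : 0 < Real.sqrt (-K/N) :=
  Real.sqrt_pos.2 (div_pos_of_neg_of_neg (by linarith) hN)

lemma sqrtKN_sq' (hN : N < 0) (hK : 0 < K) : Real.sqrt (-K/N) ^ 2 = -K / N :=
  Real.sq_sqrt (div_pos_of_neg_of_neg (by linarith) hN).le

/-- Reformulating the bound `θ < π √(N/K)` for `K < 0`. -/
lemma bound_iff (hN : N < 0) (hK : K < 0) {θ : ℝ} :
    θ < Real.pi * Real.sqrt (N/K) ↔ θ * Real.sqrt (K/N) < Real.pi := by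
  have ha := sqrtKN_pos hN hK
  have h1 : Real.sqrt (N/K) = (Real.sqrt (K/N))⁻¹ := by
    rw [← Real.sqrt_inv, inv_div]
  rw [h1, ← div_eq_mul_inv, lt_div_iff₀ ha]

lemma sKN_zero : sKN K N 0 = 0 := by
  unfold sKN
  split_ifs <;> simp

lemma cKN_zero : cKN K N 0 = 1 := by
  unfold cKN
  split_ifs <;> simp

lemma hasDerivAt_sKN (hN : N < 0) (θ : ℝ) : HasDerivAt (sKN K N) (cKN K N θ) θ := by
  rcases lt_trichotomy K 0 with hK | hK | hK
  · have ha := sqrtKN_pos hN hK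
    set a := Real.sqrt (K/N)
    have h1 : HasDerivAt (fun θ : ℝ => θ * a) a θ := by
      simpa using (hasDerivAt_id θ).mul_const a
    have h2 := ((Real.hasDerivAt_sin (θ * a)).comp θ h1).div_const a
    have he : sKN K N = fun θ : ℝ => Real.sin (θ * a) / a := by
      funext x; simp [sKN, hK, a]
    have hc : cKN K N θ = Real.cos (θ * a) := by simp [cKN, hK, a]
    rw [he, hc]
    exact h2.congr_deriv (by field_simp)
  · have he : sKN K N = fun θ : ℝ => θ := by funext x; simp [sKN, hK]
    have hc : cKN K N θ = 1 := by simp [cKN, hK]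
    rw [he, hc]; exact hasDerivAt_id θ
  · have ha := sqrtKN_pos' hN hK
    set a := Real.sqrt (-K/N)
    have h1 : HasDerivAt (fun θ : ℝ => θ * a) a θ := by
      simpa using (hasDerivAt_id θ).mul_const a
    have h2 := ((Real.hasDerivAt_sinh (θ * a)).comp θ h1).div_const a
    have he : sKN K N = fun θ : ℝ => Real.sinh (θ * a) / a := by
      funext x; simp [sKN, not_lt.2 hK.le, hK.ne', a]
    have hc : cKN K N θ = Real.cosh (θ * a) := by simp [cKN, not_lt.2 hK.le, hK.ne', a]
    rw [he, hc]
    exact h2.congr_deriv (by field_simp)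

lemma hasDerivAt_cKN (hN : N < 0) (θ : ℝ) :
    HasDerivAt (cKN K N) (-(K/N) * sKN K N θ) θ := by
  rcases lt_trichotomy K 0 with hK | hK | hK
  · have ha := sqrtKN_pos hN hK
    have ha2 := sqrtKN_sq hN hK
    set a := Real.sqrt (K/N)
    have h1 : HasDerivAt (fun θ : ℝ => θ * a) a θ := by
      simpa using (hasDerivAt_id θ).mul_const a
    have h2 := (Real.hasDerivAt_cos (θ * a)).comp θ h1
    have he : cKN K N = fun θ : ℝ => Real.cos (θ * a) := by
      funext x; simp [cKN, hK, a]
    have hc : sKN K N θ = Real.sin (θ * a) / a := by simp [sKN, hK, a]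
    rw [he, hc]
    exact h2.congr_deriv (by rw [← ha2]; field_simp)
  · have he : cKN K N = fun _ : ℝ => (1:ℝ) := by funext x; simp [cKN, hK]
    have hc : -(K/N) * sKN K N θ = 0 := by simp [hK]
    rw [he, hc]; exact hasDerivAt_const θ 1
  · have ha := sqrtKN_pos' hN hK
    have ha2 := sqrtKN_sq' hN hK
    set a := Real.sqrt (-K/N)
    have h1 : HasDerivAt (fun θ : ℝ => θ * a) a θ := by
      simpa using (hasDerivAt_id θ).mul_const a
    have h2 := (Real.hasDerivAt_cosh (θ * a)).comp θ h1
    have he : cKN K N = fun θ : ℝ => Real.cosh (θ * a) := by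
      funext x; simp [cKN, not_lt.2 hK.le, hK.ne', a]
    have hc : sKN K N θ = Real.sinh (θ * a) / a := by simp [sKN, not_lt.2 hK.le, hK.ne', a]
    rw [he, hc]
    have : -(K/N) = a^2 := by rw [ha2]; ring
    exact h2.congr_deriv (by rw [this]; field_simp)

lemma sKN_pos (hN : N < 0) {θ : ℝ} (h0 : 0 < θ)
    (hb : K < 0 → θ * Real.sqrt (K/N) < Real.pi) : 0 < sKN K N θ := by
  rcases lt_trichotomy K 0 with hK | hK | hK
  · have ha := sqrtKN_pos hN hK
    have : sKN K N θ = Real.sin (θ * Real.sqrt (K/N)) / Real.sqrt (K/N) := by simp [sKN, hK]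
    rw [this]
    exact div_pos (Real.sin_pos_of_pos_of_lt_pi (by positivity) (hb hK)) ha
  · simpa [sKN, hK] using h0
  · have ha := sqrtKN_pos' hN hK
    have : sKN K N θ = Real.sinh (θ * Real.sqrt (-K/N)) / Real.sqrt (-K/N) := by
      simp [sKN, not_lt.2 hK.le, hK.ne']
    rw [this]
    exact div_pos (by rw [Real.sinh_pos_iff]; positivity) ha

lemma sKN_nonneg (hN : N < 0) {θ : ℝ} (h0 : 0 ≤ θ)
    (hb : K < 0 → θ * Real.sqrt (K/N) ≤ Real.pi) : 0 ≤ sKN K N θ := by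
  rcases eq_or_lt_of_le h0 with h | h
  · simp [← h, sKN_zero]
  rcases lt_trichotomy K 0 with hK | hK | hK
  · have ha := sqrtKN_pos hN hK
    have : sKN K N θ = Real.sin (θ * Real.sqrt (K/N)) / Real.sqrt (K/N) := by simp [sKN, hK]
    rw [this]
    exact div_nonneg (Real.sin_nonneg_of_nonneg_of_le_pi (by positivity) (hb hK)) ha.le
  · simpa [sKN, hK] using h0
  · exact (sKN_pos hN h (fun h' => absurd h' (by linarith))).le

lemma cKN_pos (hN : N < 0) {θ : ℝ} (h0 : 0 ≤ θ)
    (hb : K < 0 → θ * Real.sqrt (K/N) < Real.pi / 2) : 0 < cKN K N θ := by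
  rcases lt_trichotomy K 0 with hK | hK | hK
  · have ha := sqrtKN_pos hN hK
    have : cKN K N θ = Real.cos (θ * Real.sqrt (K/N)) := by simp [cKN, hK]
    rw [this]
    refine Real.cos_pos_of_mem_Ioo ⟨?_, hb hK⟩
    have : (0:ℝ) < Real.pi / 2 := by positivity
    nlinarith [mul_nonneg h0 ha.le]
  · simp [cKN, hK]
  · have : cKN K N θ = Real.cosh (θ * Real.sqrt (-K/N)) := by
      simp [cKN, not_lt.2 hK.le, hK.ne']
    rw [this]; exact Real.cosh_pos _


/-- The half-angle identity `K 𝔰(θ/2)/𝔠(θ/2) = N (1 - 𝔠(θ))/𝔰(θ)`. -/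
lemma half_id (hN : N < 0) {θ : ℝ} (h0 : 0 < θ)
    (hb : K < 0 → θ * Real.sqrt (K/N) < Real.pi) :
    K * sKN K N (θ/2) / cKN K N (θ/2) = N * (1 - cKN K N θ) / sKN K N θ := by
  rcases lt_trichotomy K 0 with hK | hK | hK
  · have ha := sqrtKN_pos hN hK
    have ha2 := sqrtKN_sq hN hK
    set a := Real.sqrt (K/N) with hadef
    have hx : θ * a < Real.pi := hb hK
    have hs2 : 0 < Real.sin (θ * a / 2) :=
      Real.sin_pos_of_pos_of_lt_pi (by positivity) (by nlinarith [Real.pi_pos])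
    have hc2 : 0 < Real.cos (θ * a / 2) := by
      apply Real.cos_pos_of_mem_Ioo
      constructor
      · nlinarith [Real.pi_pos, mul_pos h0 ha]
      · nlinarith [Real.pi_pos, mul_pos h0 ha]
    have e1 : sKN K N (θ/2) = Real.sin (θ * a / 2) / a := by
      simp only [sKN, if_pos hK, ← hadef]
      rw [show θ/2 * a = θ * a / 2 by ring]
    have e2 : cKN K N (θ/2) = Real.cos (θ * a / 2) := by
      simp only [cKN, if_pos hK, ← hadef]
      rw [show θ/2 * a = θ * a / 2 by ring]
    have e3 : sKN K N θ = Real.sin (θ * a) / a := by simp only [sKN, if_pos hK, ← hadef]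
    have e4 : cKN K N θ = Real.cos (θ * a) := by simp only [cKN, if_pos hK, ← hadef]
    have hsin2 := Real.sin_two_mul (θ * a / 2)
    rw [show 2 * (θ * a / 2) = θ * a by ring] at hsin2
    have hcos2 := Real.cos_two_mul (θ * a / 2)
    rw [show 2 * (θ * a / 2) = θ * a by ring] at hcos2
    have hpyth := Real.sin_sq_add_cos_sq (θ * a / 2)
    have hcos2' : 1 - Real.cos (θ * a) = 2 * Real.sin (θ * a / 2) ^ 2 := by
      rw [hcos2]; linear_combination (-2 : ℝ) * hpyth
    have hKa : K = N * a ^ 2 := by rw [ha2, mul_comm, div_mul_cancel₀ _ hN.ne]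
    rw [e1, e2, e3, e4, hsin2, hcos2', hKa]
    field_simp
  · simp [sKN, cKN, hK]
  · have ha := sqrtKN_pos' hN hK
    have ha2 := sqrtKN_sq' hN hK
    have hKlt : ¬ K < 0 := not_lt.2 hK.le
    set a := Real.sqrt (-K/N) with hadef
    have hs2 : 0 < Real.sinh (θ * a / 2) := by rw [Real.sinh_pos_iff]; positivity
    have hc2 : 0 < Real.cosh (θ * a / 2) := Real.cosh_pos _
    have e1 : sKN K N (θ/2) = Real.sinh (θ * a / 2) / a := by
      simp only [sKN, if_neg hKlt, if_neg hK.ne', ← hadef]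
      rw [show θ/2 * a = θ * a / 2 by ring]
    have e2 : cKN K N (θ/2) = Real.cosh (θ * a / 2) := by
      simp only [cKN, if_neg hKlt, if_neg hK.ne', ← hadef]
      rw [show θ/2 * a = θ * a / 2 by ring]
    have e3 : sKN K N θ = Real.sinh (θ * a) / a := by
      simp only [sKN, if_neg hKlt, if_neg hK.ne', ← hadef]
    have e4 : cKN K N θ = Real.cosh (θ * a) := by
      simp only [cKN, if_neg hKlt, if_neg hK.ne', ← hadef]
    have hsin2 := Real.sinh_two_mul (θ * a / 2)
    rw [show 2 * (θ * a / 2) = θ * a by ring] at hsin2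
    have hcos2 := Real.cosh_two_mul (θ * a / 2)
    rw [show 2 * (θ * a / 2) = θ * a by ring] at hcos2
    have hpyth := Real.cosh_sq_sub_sinh_sq (θ * a / 2)
    have hcos2' : 1 - Real.cosh (θ * a) = -(2 * Real.sinh (θ * a / 2) ^ 2) := by
      rw [hcos2]; linear_combination (-1 : ℝ) * hpyth
    have hKa : K = -(N * a ^ 2) := by
      rw [ha2, mul_comm, div_mul_cancel₀ _ hN.ne]; ring
    rw [e1, e2, e3, e4, hsin2, hcos2', hKa]
    field_simp

/-- Under the standing bounds, `σ` is given by the ratio formula. -/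
lemma sigmaKN_eq (hN : N < 0) {θ : ℝ} (h0 : 0 < θ)
    (hb : K < 0 → θ * Real.sqrt (K/N) < Real.pi) (t : ℝ) :
    sigmaKN K N t θ = ENNReal.ofReal (sKN K N (t*θ) / sKN K N θ) := by
  rcases lt_trichotomy K 0 with hK | hK | hK
  · have ha := sqrtKN_pos hN hK
    have ha2 := sqrtKN_sq hN hK
    have h1 : K * θ ^ 2 < 0 := mul_neg_of_neg_of_pos hK (by positivity)
    have h2 : N * Real.pi ^ 2 < K * θ ^ 2 := by
      have hx : (θ * Real.sqrt (K/N)) ^ 2 < Real.pi ^ 2 := by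
        have h' := hb hK
        nlinarith [mul_pos h0 ha]
      have hKa : K = N * Real.sqrt (K/N) ^ 2 := by
        rw [ha2, mul_comm, div_mul_cancel₀ _ hN.ne]
      nlinarith [hx, hN]
    rw [sigmaKN, if_pos (Or.inl ⟨h2, h1⟩)]
  · subst hK
    have h1 : (0:ℝ) * θ ^ 2 = 0 := by ring
    have hcond : ¬((N * Real.pi ^ 2 < 0 * θ ^ 2 ∧ (0:ℝ) * θ ^ 2 < 0) ∨ 0 < (0:ℝ) * θ ^ 2) := by
      rw [h1]; rintro (⟨_, h⟩ | h) <;> exact lt_irrefl 0 h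
    have hval : sKN 0 N (t * θ) / sKN 0 N θ = t := by
      simp only [sKN, lt_irrefl, if_false, if_pos rfl, if_true]
      rw [mul_div_assoc, div_self h0.ne', mul_one]
    rw [sigmaKN, if_neg hcond, if_pos h1, hval]
  · have h1 : 0 < K * θ ^ 2 := mul_pos hK (by positivity)
    rw [sigmaKN, if_pos (Or.inr h1)]


/-! ### eexp / epos / fN lemmas -/

lemma eexp_coe (v : ℝ) : eexp (v : EReal) = ENNReal.ofReal (Real.exp v) := by
  rw [eexp, if_neg (EReal.coe_ne_top v), if_neg (EReal.coe_ne_bot v), EReal.toReal_coe]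

lemma epos_coe (v : ℝ) : epos (v : EReal) = ENNReal.ofReal v := by
  rw [epos, if_neg (EReal.coe_ne_top v), EReal.toReal_coe]

lemma epos_bot : epos (⊥ : EReal) = 0 := by
  rw [epos, if_neg bot_ne_top]; simp

lemma neg_inv_pos (hN : N < 0) : (0:ℝ) < -1/N := div_pos_of_neg_of_neg (by norm_num) hN

lemma fN_real {f : X → EReal} (hN : N < 0) {x : X}
    (h1 : f x ≠ ⊤) (h2 : f x ≠ ⊥) :
    fN f N x = ENNReal.ofReal (Real.exp ((-1/N) * (f x).toReal)) := by
  rw [fN, ← EReal.coe_toReal h1 h2, ← EReal.coe_mul, eexp_coe, EReal.toReal_coe]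

lemma fN_bot {f : X → EReal} (hN : N < 0) {x : X} (h : f x = ⊥) :
    fN f N x = 0 := by
  rw [fN, h, EReal.coe_mul_bot_of_pos (by exact_mod_cast neg_inv_pos hN), eexp,
    if_neg bot_ne_top, if_pos rfl]

lemma fN_top {f : X → EReal} (hN : N < 0) {x : X} (h : f x = ⊤) :
    fN f N x = ⊤ := by
  rw [fN, h, EReal.coe_mul_top_of_pos (by exact_mod_cast neg_inv_pos hN), eexp, if_pos rfl]

lemma fN_ne_top {f : X → EReal} (hN : N < 0) {x : X} (h : f x ≠ ⊤) :
    fN f N x ≠ ⊤ := by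
  rcases eq_or_ne (f x) ⊥ with h' | h'
  · rw [fN_bot hN h']; exact ENNReal.zero_ne_top
  · rw [fN_real hN h h']; exact ENNReal.ofReal_ne_top

lemma fN_pos {f : X → EReal} (hN : N < 0) {x : X} (h : f x ≠ ⊥) :
    0 < fN f N x := by
  rcases eq_or_ne (f x) ⊤ with h' | h'
  · rw [fN_top hN h']; exact (by simp : (0:ℝ≥0∞) < ⊤)
  · rw [fN_real hN h' h]; exact ENNReal.ofReal_pos.2 (Real.exp_pos _)

/-! ### The two key limits -/

/-- The limit of the convexity difference quotient along a geodesic. -/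
lemma slope_limit_geo (hN : N < 0) {d r : ℝ} (hd : 0 < d)
    (hb : K < 0 → d * Real.sqrt (K/N) < Real.pi) (_hr : 0 ≤ r) :
    Tendsto (fun t : ℝ =>
        N * Real.log ((sKN K N ((1-t)*d) + sKN K N (t*d) * r) / sKN K N d) / (t * d))
      (𝓝[>] (0:ℝ)) (𝓝 ((-N) * (cKN K N d - r) / sKN K N d)) := by
  have hs : 0 < sKN K N d := sKN_pos hN hd hb
  set g : ℝ → ℝ := fun t => (sKN K N ((1-t)*d) + sKN K N (t*d) * r) / sKN K N d with hgdef
  have h1 : HasDerivAt (fun t : ℝ => (1-t)*d) (-d) 0 := by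
    simpa using ((hasDerivAt_id (0:ℝ)).const_sub 1).mul_const d
  have h2 : HasDerivAt (fun t : ℝ => t*d) d 0 := by
    simpa using (hasDerivAt_id (0:ℝ)).mul_const d
  have h3 : HasDerivAt (fun t : ℝ => sKN K N ((1-t)*d)) (cKN K N d * -d) 0 := by
    have := (hasDerivAt_sKN (K := K) hN ((1-(0:ℝ))*d)).comp 0 h1
    norm_num at this ⊢
    exact this
  have h4 : HasDerivAt (fun t : ℝ => sKN K N (t*d) * r) (d * r) 0 := by
    have := ((hasDerivAt_sKN (K := K) hN ((0:ℝ)*d)).comp 0 h2).mul_const r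
    norm_num [cKN_zero] at this ⊢
    exact this
  have hgd : HasDerivAt g ((cKN K N d * -d + d * r) / sKN K N d) 0 := (h3.add h4).div_const _
  have hg0 : g 0 = 1 := by
    simp only [hgdef]
    norm_num [sKN_zero]
    exact hs.ne'
  have hlog : HasDerivAt (fun t => Real.log (g t)) ((cKN K N d * -d + d * r) / sKN K N d) 0 := by
    have := hgd.log (by rw [hg0]; norm_num)
    rwa [hg0, div_one] at this
  have hslope := (hasDerivAt_iff_tendsto_slope.1 hlog).mono_left
    (nhdsWithin_mono 0 (fun x hx => (ne_of_gt hx : x ≠ 0)))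
  have hmul := hslope.const_mul (N / d)
  have heq : (fun t : ℝ => (N / d) * slope (fun t => Real.log (g t)) 0 t)
      = fun t : ℝ => N * Real.log (g t) / (t * d) := by
    funext t
    rw [slope_def_field, hg0, Real.log_one, sub_zero, sub_zero, div_mul_div_comm,
      mul_comm t d]
  rw [heq] at hmul
  have hval : N / d * ((cKN K N d * -d + d * r) / sKN K N d)
      = (-N) * (cKN K N d - r) / sKN K N d := by
    field_simp
    ring
  rwa [hval] at hmul

/-- The limit governing the upper bound on the slope. -/
lemma slope_limit_ball (hN : N < 0) {c : ℝ} (_hc : 0 ≤ c) :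
    Tendsto (fun θ : ℝ => N * Real.log (cKN K N θ - c/(-N) * sKN K N θ) / θ)
      (𝓝[>] (0:ℝ)) (𝓝 c) := by
  set P : ℝ → ℝ := fun θ => cKN K N θ - c/(-N) * sKN K N θ with hPdef
  have hPd : HasDerivAt P (-(K/N) * sKN K N 0 - c/(-N) * cKN K N 0) 0 :=
    (hasDerivAt_cKN hN 0).sub ((hasDerivAt_sKN hN 0).const_mul (c/(-N)))
  have hP0 : P 0 = 1 := by simp [hPdef, cKN_zero, sKN_zero]
  have hPd' : HasDerivAt P (-(c/(-N))) 0 := by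
    have : -(K/N) * sKN K N 0 - c/(-N) * cKN K N 0 = -(c/(-N)) := by
      rw [sKN_zero, cKN_zero]; ring
    rwa [this] at hPd
  have hlog : HasDerivAt (fun θ => Real.log (P θ)) (-(c/(-N))) 0 := by
    have := hPd'.log (by rw [hP0]; norm_num)
    rwa [hP0, div_one] at this
  have hslope := (hasDerivAt_iff_tendsto_slope.1 hlog).mono_left
    (nhdsWithin_mono 0 (fun x hx => (ne_of_gt hx : x ≠ 0)))
  have hmul := hslope.const_mul N
  have heq : (fun θ : ℝ => N * slope (fun θ => Real.log (P θ)) 0 θ)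
      = fun θ : ℝ => N * Real.log (P θ) / θ := by
    funext θ
    rw [slope_def_field, hP0, Real.log_one, sub_zero, sub_zero, mul_div_assoc]
  rw [heq] at hmul
  have hval : N * -(c / -N) = c := by
    field_simp
    rw [mul_comm, mul_div_assoc, div_self hN.ne, mul_one]
  rwa [hval] at hmul

/-- Continuity + positivity of `P` near `0`, for the upper bound. -/
lemma P_eventually_pos (hN : N < 0) (c : ℝ) :
    ∀ᶠ θ : ℝ in 𝓝[>] 0, 0 < cKN K N θ - c/(-N) * sKN K N θ := by
  have hPd : HasDerivAt (fun θ => cKN K N θ - c/(-N) * sKN K N θ)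
      (-(K/N) * sKN K N 0 - c/(-N) * cKN K N 0) 0 :=
    (hasDerivAt_cKN hN 0).sub ((hasDerivAt_sKN hN 0).const_mul (c/(-N)))
  have hcont := hPd.continuousAt.tendsto
  have hP0 : cKN K N 0 - c/(-N) * sKN K N 0 = 1 := by simp [cKN_zero, sKN_zero]
  rw [hP0] at hcont
  exact (hcont.mono_left nhdsWithin_le_nhds).eventually (eventually_gt_nhds one_pos)

/-! ### Simplifying the right-hand-side expression -/

/-- When `f z = ⊤` the expression vanishes. -/
lemma expr_eq_top (hN : N < 0) {f : X → EReal} {y z : X}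
    (hs : 0 < sKN K N (dist z y)) (hfy : f y ≠ ⊤) (hfyb : f y ≠ ⊥) (hfz : f z = ⊤) :
    epos (-(((N / sKN K N (dist z y) : ℝ) : EReal)
        * (1 - ((fN f N z / fN f N y : ℝ≥0∞) : EReal))
      - ((K * sKN K N (dist z y / 2) / cKN K N (dist z y / 2) : ℝ) : EReal))) = 0 := by
  rw [fN_top hN hfz, ENNReal.top_div_of_ne_top (fN_ne_top hN hfy), EReal.coe_ennreal_top]
  have h1 : (1 : EReal) - ⊤ = ⊥ := EReal.sub_top 1
  rw [h1, EReal.coe_mul_bot_of_neg (by exact_mod_cast div_neg_of_neg_of_pos hN hs),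
    EReal.top_sub_coe, EReal.neg_top, epos_bot]

/-- When `f z ≠ ⊤`, the expression equals `ofReal (-N (𝔠(d) - r)/𝔰(d))`. -/
lemma expr_eq_real (hN : N < 0) {f : X → EReal} {y z : X}
    (hd : 0 < dist z y) (hb : K < 0 → dist z y * Real.sqrt (K/N) < Real.pi)
    (hfy : f y ≠ ⊤) (hfyb : f y ≠ ⊥) (hfz : f z ≠ ⊤) :
    epos (-(((N / sKN K N (dist z y) : ℝ) : EReal)
        * (1 - ((fN f N z / fN f N y : ℝ≥0∞) : EReal))
      - ((K * sKN K N (dist z y / 2) / cKN K N (dist z y / 2) : ℝ) : EReal)))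
    = ENNReal.ofReal ((-N) * (cKN K N (dist z y) - (fN f N z / fN f N y).toReal)
        / sKN K N (dist z y)) := by
  have hs : 0 < sKN K N (dist z y) := sKN_pos hN hd hb
  have hq : fN f N z / fN f N y ≠ ⊤ :=
    (ENNReal.div_lt_top (fN_ne_top hN hfz) (fN_pos hN hfyb).ne').ne
  set r := (fN f N z / fN f N y).toReal with hrdef
  have h1 : ((fN f N z / fN f N y : ℝ≥0∞) : EReal) = (r : EReal) := by
    rw [← ENNReal.ofReal_toReal hq, EReal.coe_ennreal_ofReal,
      max_eq_left ENNReal.toReal_nonneg]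
  rw [h1, show (1 : EReal) - (r : EReal) = ((1 - r : ℝ) : EReal) by
      rw [EReal.coe_sub, EReal.coe_one],
    ← EReal.coe_mul, ← EReal.coe_sub, ← EReal.coe_neg, epos_coe]
  congr 1
  rw [half_id hN hd hb]
  field_simp
  ring


end Aux

end KNPaper

theorem stmt_16 {X : Type*} [MetricSpace X] (f : X → EReal) (K N : ℝ) (hN : N < 0)
    (hf : KNPaper.KNConvex f K N) :
    ∀ y ∈ KNPaper.Dom f, ∀ R : ℝ, 0 < R →
      (K < 0 → R < Real.pi * Real.sqrt (N / K)) →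
      KNPaper.descSlope f y
        = ⨆ z ∈ Metric.ball y R \ {y},
            KNPaper.epos
              (-(((N / KNPaper.sKN K N (dist z y) : ℝ) : EReal)
                  * (1 - ((KNPaper.fN f N z / KNPaper.fN f N y : ℝ≥0∞) : EReal))
                - ((K * KNPaper.sKN K N (dist z y / 2)
                    / KNPaper.cKN K N (dist z y / 2) : ℝ) : EReal))) := by
  classical
  intro y hy R hR hRK
  obtain ⟨hyt, hyb⟩ := hy
  have hNpos : (0:ℝ) < -N := by linarith
  -- the bound transfer
  have hbnd : ∀ {dd : ℝ}, dd < R → (K < 0 → dd * Real.sqrt (K/N) < Real.pi) := by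
    intro dd hlt hK
    exact (KNPaper.bound_iff hN hK).1 (hlt.trans (hRK hK))
  apply le_antisymm
  · -- `descSlope ≤ sup`
    set S := ⨆ z ∈ Metric.ball y R \ {y},
      KNPaper.epos
        (-(((N / KNPaper.sKN K N (dist z y) : ℝ) : EReal)
            * (1 - ((KNPaper.fN f N z / KNPaper.fN f N y : ℝ≥0∞) : EReal))
          - ((K * KNPaper.sKN K N (dist z y / 2)
              / KNPaper.cKN K N (dist z y / 2) : ℝ) : EReal))) with hSdef
    rcases eq_or_ne S ⊤ with hS | hS
    · rw [hS]; exact le_top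
    set c := S.toReal with hcdef
    have hc0 : 0 ≤ c := ENNReal.toReal_nonneg
    have hSc : S = ENNReal.ofReal c := (ENNReal.ofReal_toReal hS).symm
    have hdistT : Filter.Tendsto (fun z : X => dist z y) (𝓝[≠] y) (𝓝[>] (0:ℝ)) := by
      rw [tendsto_nhdsWithin_iff]
      constructor
      · have hcont : Continuous fun z : X => dist z y := continuous_id.dist continuous_const
        have := (hcont.tendsto y).mono_left (nhdsWithin_le_nhds (s := {y}ᶜ))
        simpa using this
      · filter_upwards [self_mem_nhdsWithin] with z hz
        exact dist_pos.2 hz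
    have hev1 : ∀ᶠ z in 𝓝[≠] y,
        0 < KNPaper.cKN K N (dist z y) - c/(-N) * KNPaper.sKN K N (dist z y) :=
      hdistT.eventually (KNPaper.P_eventually_pos hN c)
    have hev2 : ∀ᶠ z in 𝓝[≠] y, dist z y < R :=
      hdistT.eventually (by
        filter_upwards [Ioo_mem_nhdsGT_of_mem (Set.left_mem_Ico.2 hR)] with u hu
        exact hu.2)
    have hev3 : ∀ᶠ z in 𝓝[≠] y, z ≠ y := by
      filter_upwards [self_mem_nhdsWithin] with z hz
      exact hz
    have hbound : ∀ᶠ z in 𝓝[≠] y,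
        KNPaper.epos (f y - f z) / ENNReal.ofReal (dist z y)
          ≤ ENNReal.ofReal (N * Real.log (KNPaper.cKN K N (dist z y)
              - c/(-N) * KNPaper.sKN K N (dist z y)) / dist z y) := by
      filter_upwards [hev1, hev2, hev3] with z hP hzR hzy
      have hd : 0 < dist z y := dist_pos.2 hzy
      have hb : K < 0 → dist z y * Real.sqrt (K/N) < Real.pi := hbnd hzR
      have hs := KNPaper.sKN_pos hN hd hb
      by_cases hfz : f z = ⊤
      · rw [hfz, EReal.sub_top, KNPaper.epos_bot, ENNReal.zero_div]
        exact zero_le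
      · have hmem : z ∈ Metric.ball y R \ {y} := ⟨Metric.mem_ball.2 hzR, hzy⟩
        have hES : KNPaper.epos
            (-(((N / KNPaper.sKN K N (dist z y) : ℝ) : EReal)
                * (1 - ((KNPaper.fN f N z / KNPaper.fN f N y : ℝ≥0∞) : EReal))
              - ((K * KNPaper.sKN K N (dist z y / 2)
                  / KNPaper.cKN K N (dist z y / 2) : ℝ) : EReal))) ≤ S := by
          rw [hSdef]
          exact le_iSup₂_of_le z hmem le_rfl
        rw [KNPaper.expr_eq_real hN hd hb hyt hyb hfz, hSc] at hES
        set rz := (KNPaper.fN f N z / KNPaper.fN f N y).toReal with hrzdef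
        have hreal : (-N) * (KNPaper.cKN K N (dist z y) - rz) / KNPaper.sKN K N (dist z y) ≤ c :=
          (ENNReal.ofReal_le_ofReal_iff hc0).1 hES
        have hrge : KNPaper.cKN K N (dist z y) - c/(-N) * KNPaper.sKN K N (dist z y) ≤ rz := by
          have h1 : (-N) * (KNPaper.cKN K N (dist z y) - rz) ≤ c * KNPaper.sKN K N (dist z y) :=
            (div_le_iff₀ hs).1 hreal
          have h2 : KNPaper.cKN K N (dist z y) - rz ≤ c / (-N) * KNPaper.sKN K N (dist z y) := by
            rw [div_mul_eq_mul_div, le_div_iff₀ hNpos]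
            linarith
          linarith
        have hfzb : f z ≠ ⊥ := by
          intro hbot
          have : rz = 0 := by
            rw [hrzdef, KNPaper.fN_bot hN hbot, ENNReal.zero_div, ENNReal.toReal_zero]
          rw [this] at hrge
          linarith
        have hrz : rz = Real.exp ((-1/N) * (f z).toReal)
            / Real.exp ((-1/N) * (f y).toReal) := by
          rw [hrzdef, ENNReal.toReal_div, KNPaper.fN_real hN hfz hfzb,
            KNPaper.fN_real hN hyt hyb, ENNReal.toReal_ofReal (Real.exp_pos _).le,
            ENNReal.toReal_ofReal (Real.exp_pos _).le]
        have hlogP : Real.log (KNPaper.cKN K N (dist z y)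
            - c/(-N) * KNPaper.sKN K N (dist z y))
            ≤ (-1/N) * (f z).toReal - (-1/N) * (f y).toReal := by
          calc Real.log (KNPaper.cKN K N (dist z y) - c/(-N) * KNPaper.sKN K N (dist z y))
              ≤ Real.log rz := Real.log_le_log hP hrge
            _ = (-1/N) * (f z).toReal - (-1/N) * (f y).toReal := by
                rw [hrz, Real.log_div (Real.exp_pos _).ne' (Real.exp_pos _).ne',
                  Real.log_exp, Real.log_exp]
        have key : (f y).toReal - (f z).toReal
            ≤ N * Real.log (KNPaper.cKN K N (dist z y)
                - c/(-N) * KNPaper.sKN K N (dist z y)) := by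
          have h4 := mul_le_mul_of_nonneg_left hlogP hNpos.le
          have hNN : (-N) * (-1/N) = 1 := by
            have hN0 : N ≠ 0 := hN.ne
            field_simp
          have h5 : (-N) * ((-1/N) * (f z).toReal - (-1/N) * (f y).toReal)
              = (f z).toReal - (f y).toReal := by
            rw [mul_sub, ← mul_assoc, ← mul_assoc, hNN, one_mul, one_mul]
          have h6 : N * Real.log (KNPaper.cKN K N (dist z y)
              - c/(-N) * KNPaper.sKN K N (dist z y))
              = -((-N) * Real.log (KNPaper.cKN K N (dist z y)
                - c/(-N) * KNPaper.sKN K N (dist z y))) := by ring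
          rw [h5] at h4
          rw [h6]
          linarith
        have hsub : f y - f z = (((f y).toReal - (f z).toReal : ℝ) : EReal) := by
          rw [EReal.coe_sub, EReal.coe_toReal hyt hyb, EReal.coe_toReal hfz hfzb]
        rw [hsub, KNPaper.epos_coe, ← ENNReal.ofReal_div_of_pos hd]
        exact ENNReal.ofReal_le_ofReal ((div_le_div_iff_of_pos_right hd).2 key)
    have hFtend : Filter.Tendsto (fun z : X => ENNReal.ofReal
        (N * Real.log (KNPaper.cKN K N (dist z y)
          - c/(-N) * KNPaper.sKN K N (dist z y)) / dist z y)) (𝓝[≠] y)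
        (𝓝 (ENNReal.ofReal c)) := by
      have := (ENNReal.tendsto_ofReal (KNPaper.slope_limit_ball (K := K) hN hc0)).comp hdistT
      exact this
    rcases (𝓝[≠] y).eq_or_neBot with hbot | hne
    · unfold KNPaper.descSlope
      rw [hbot, Filter.limsup_bot]
      exact zero_le
    · unfold KNPaper.descSlope
      calc Filter.limsup (fun z : X =>
            KNPaper.epos (f y - f z) / ENNReal.ofReal (dist z y)) (𝓝[≠] y)
          ≤ Filter.limsup (fun z : X => ENNReal.ofReal
              (N * Real.log (KNPaper.cKN K N (dist z y)
                - c/(-N) * KNPaper.sKN K N (dist z y)) / dist z y)) (𝓝[≠] y) :=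
            Filter.limsup_le_limsup hbound
        _ = ENNReal.ofReal c := hFtend.limsup_eq
        _ = S := ENNReal.ofReal_toReal hS
  · -- `sup ≤ descSlope`
    apply iSup₂_le
    intro z hz
    obtain ⟨hzball, hzny⟩ := hz
    have hzy : z ≠ y := hzny
    have hd : 0 < dist z y := dist_pos.2 hzy
    have hdR : dist z y < R := Metric.mem_ball.1 hzball
    have hb : K < 0 → dist z y * Real.sqrt (K/N) < Real.pi := hbnd hdR
    have hs := KNPaper.sKN_pos hN hd hb
    by_cases hfz : f z = ⊤
    · rw [KNPaper.expr_eq_top hN hs hyt hyb hfz]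
      exact zero_le
    obtain ⟨γ, hgeo, -, hγ0, hγ1, hconv⟩ := hf y (Set.mem_univ y) z (Set.mem_univ z) hyt hfz
      (fun hK => by rw [dist_comm]; exact hdR.trans (hRK hK))
    have hdyz : dist y z = dist z y := dist_comm y z
    have hdistt : ∀ t, t ∈ Set.Icc (0:ℝ) 1 → dist (γ t) y = t * dist z y := by
      intro t ht
      have h := hgeo t ht 0 ⟨le_refl 0, zero_le_one⟩
      rw [hγ0, hγ1, hdyz] at h
      rwa [zero_sub, abs_neg, abs_of_nonneg ht.1] at h
    have hA := KNPaper.fN_real (f := f) hN hyt hyb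
    set Ay : ℝ := Real.exp ((-1/N) * (f y).toReal) with hAydef
    have hApos : 0 < Ay := Real.exp_pos _
    set Bz : ℝ := (KNPaper.fN f N z).toReal with hBzdef
    have hBz0 : 0 ≤ Bz := ENNReal.toReal_nonneg
    have hFz : KNPaper.fN f N z = ENNReal.ofReal Bz :=
      (ENNReal.ofReal_toReal (KNPaper.fN_ne_top hN hfz)).symm
    set r : ℝ := Bz / Ay with hrdef
    have hr0 : 0 ≤ r := div_nonneg hBz0 hApos.le
    have hrA : r * Ay = Bz := by rw [hrdef, div_mul_cancel₀ _ hApos.ne']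
    have hrtoReal : (KNPaper.fN f N z / KNPaper.fN f N y).toReal = r := by
      rw [ENNReal.toReal_div, hA, ENNReal.toReal_ofReal hApos.le, ← hBzdef, hrdef]
    set g : ℝ → ℝ := fun t =>
      (KNPaper.sKN K N ((1-t) * dist z y) + KNPaper.sKN K N (t * dist z y) * r)
        / KNPaper.sKN K N (dist z y) with hgdef
    -- the pointwise bound along the geodesic
    have hkey : ∀ t, t ∈ Set.Ioo (0:ℝ) 1 →
        ENNReal.ofReal (N * Real.log (g t) / (t * dist z y))
          ≤ KNPaper.epos (f y - f (γ t)) / ENNReal.ofReal (dist (γ t) y) := by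
      intro t ht
      obtain ⟨ht0, ht1⟩ := ht
      have h1d : (1-t) * dist z y < dist z y := by nlinarith
      have htd : t * dist z y < dist z y := by nlinarith
      have hs1 : 0 < KNPaper.sKN K N ((1-t) * dist z y) :=
        KNPaper.sKN_pos hN (by nlinarith) (fun hK =>
          lt_trans (mul_lt_mul_of_pos_right h1d (KNPaper.sqrtKN_pos hN hK)) (hb hK))
      have hs2 : 0 ≤ KNPaper.sKN K N (t * dist z y) :=
        KNPaper.sKN_nonneg hN (by positivity) (fun hK =>
          le_of_lt (lt_trans (mul_lt_mul_of_pos_right htd (KNPaper.sqrtKN_pos hN hK)) (hb hK)))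
      have hgt : 0 < g t := by
        rw [hgdef]
        exact div_pos (add_pos_of_pos_of_nonneg hs1 (mul_nonneg hs2 hr0)) hs
      have hcv := hconv t ⟨ht0.le, ht1.le⟩
      rw [hdyz, KNPaper.sigmaKN_eq hN hd hb (1-t), KNPaper.sigmaKN_eq hN hd hb t,
        hA, hFz] at hcv
      have hrhs : ENNReal.ofReal (KNPaper.sKN K N ((1-t) * dist z y)
            / KNPaper.sKN K N (dist z y)) * ENNReal.ofReal Ay
          + ENNReal.ofReal (KNPaper.sKN K N (t * dist z y)
            / KNPaper.sKN K N (dist z y)) * ENNReal.ofReal Bz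
          = ENNReal.ofReal (Ay * g t) := by
        rw [← ENNReal.ofReal_mul (div_nonneg hs1.le hs.le),
          ← ENNReal.ofReal_mul (div_nonneg hs2 hs.le),
          ← ENNReal.ofReal_add (mul_nonneg (div_nonneg hs1.le hs.le) hApos.le)
            (mul_nonneg (div_nonneg hs2 hs.le) hBz0)]
        congr 1
        rw [hgdef, ← hrA]
        field_simp
      rw [hrhs] at hcv
      rcases eq_or_ne (f (γ t)) ⊤ with hft | hft
      · exfalso
        rw [KNPaper.fN_top hN hft, top_le_iff] at hcv
        exact ENNReal.ofReal_ne_top hcv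
      rcases eq_or_ne (f (γ t)) ⊥ with hfb | hfb
      · have : f y - f (γ t) = ⊤ := by
          rw [← EReal.coe_toReal hyt hyb, hfb, EReal.coe_sub_bot]
        rw [this, KNPaper.epos, if_pos rfl,
          ENNReal.top_div_of_ne_top ENNReal.ofReal_ne_top]
        exact le_top
      -- the finite case
      have hft' := KNPaper.fN_real hN hft hfb
      rw [hft'] at hcv
      have hAg : 0 < Ay * g t := mul_pos hApos hgt
      have hexp : Real.exp ((-1/N) * (f (γ t)).toReal) ≤ Ay * g t :=
        (ENNReal.ofReal_le_ofReal_iff hAg.le).1 hcv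
      have hlog : (-1/N) * (f (γ t)).toReal ≤ Real.log (Ay * g t) :=
        (Real.le_log_iff_exp_le hAg).2 hexp
      rw [Real.log_mul hApos.ne' hgt.ne', hAydef, Real.log_exp] at hlog
      have key : N * Real.log (g t) ≤ (f y).toReal - (f (γ t)).toReal := by
        have h4 := mul_le_mul_of_nonneg_left hlog hNpos.le
        have hNN : (-N) * (-1/N) = 1 := by
          have hN0 : N ≠ 0 := hN.ne
          field_simp
        have h5 : (-N) * ((-1/N) * (f (γ t)).toReal) = (f (γ t)).toReal := by
          rw [← mul_assoc, hNN, one_mul]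
        have h6 : (-N) * ((-1/N) * (f y).toReal + Real.log (g t))
            = (f y).toReal + (-N) * Real.log (g t) := by
          rw [mul_add, ← mul_assoc, hNN, one_mul]
        rw [h5, h6] at h4
        have h7 : N * Real.log (g t) = -((-N) * Real.log (g t)) := by ring
        rw [h7]
        linarith
      have hsub : f y - f (γ t) = (((f y).toReal - (f (γ t)).toReal : ℝ) : EReal) := by
        rw [EReal.coe_sub, EReal.coe_toReal hyt hyb, EReal.coe_toReal hft hfb]
      have htd0 : 0 < t * dist z y := mul_pos ht0 hd
      rw [hsub, KNPaper.epos_coe, hdistt t ⟨ht0.le, ht1.le⟩,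
        ← ENNReal.ofReal_div_of_pos htd0]
      exact ENNReal.ofReal_le_ofReal ((div_le_div_iff_of_pos_right htd0).2 key)
    -- tendsto of γ into the punctured neighborhood
    have hγtend : Filter.Tendsto γ (𝓝[>] (0:ℝ)) (𝓝[≠] y) := by
      rw [tendsto_nhdsWithin_iff]
      constructor
      · rw [tendsto_iff_dist_tendsto_zero]
        have hmul : Filter.Tendsto (fun t : ℝ => t * dist z y) (𝓝[>] (0:ℝ)) (𝓝 0) := by
          have hcont : Continuous fun t : ℝ => t * dist z y := continuous_id.mul continuous_const
          have := (hcont.tendsto (0:ℝ)).mono_left (nhdsWithin_le_nhds (s := Set.Ioi (0:ℝ)))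
          simpa using this
        apply hmul.congr'
        filter_upwards [Ioo_mem_nhdsGT_of_mem (Set.left_mem_Ico.2 one_pos)] with t ht
        exact (hdistt t ⟨ht.1.le, ht.2.le⟩).symm
      · filter_upwards [Ioo_mem_nhdsGT_of_mem (Set.left_mem_Ico.2 one_pos)] with t ht
        have hpos : 0 < dist (γ t) y := by
          rw [hdistt t ⟨ht.1.le, ht.2.le⟩]
          have := ht.1
          positivity
        exact dist_pos.1 hpos
    -- pass to the limit
    have hLtend := ENNReal.tendsto_ofReal
      (KNPaper.slope_limit_geo (K := K) hN hd hb hr0)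
    rw [KNPaper.expr_eq_real hN hd hb hyt hyb hfz, hrtoReal]
    unfold KNPaper.descSlope
    calc ENNReal.ofReal ((-N) * (KNPaper.cKN K N (dist z y) - r) / KNPaper.sKN K N (dist z y))
        = Filter.liminf (fun t : ℝ => ENNReal.ofReal
            (N * Real.log (g t) / (t * dist z y))) (𝓝[>] (0:ℝ)) := hLtend.liminf_eq.symm
      _ ≤ Filter.liminf ((fun w : X =>
            KNPaper.epos (f y - f w) / ENNReal.ofReal (dist w y)) ∘ γ) (𝓝[>] (0:ℝ)) :=
          Filter.liminf_le_liminf (by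
            filter_upwards [Ioo_mem_nhdsGT_of_mem (Set.left_mem_Ico.2 one_pos)] with t ht
            exact hkey t ht)
      _ ≤ Filter.limsup ((fun w : X =>
            KNPaper.epos (f y - f w) / ENNReal.ofReal (dist w y)) ∘ γ) (𝓝[>] (0:ℝ)) :=
          Filter.liminf_le_limsup
      _ = Filter.limsup (fun w : X =>
            KNPaper.epos (f y - f w) / ENNReal.ofReal (dist w y)) (Filter.map γ (𝓝[>] (0:ℝ))) :=
          Filter.limsup_comp _ γ _
      _ ≤ Filter.limsup (fun w : X =>
            KNPaper.epos (f y - f w) / ENNReal.ofReal (dist w y)) (𝓝[≠] y) :=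
          Filter.limsup_le_limsup_of_le hγtend
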